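/- Assume P and PᵀP are irreducible, there is more than one coarse state, and at least one coarse state contains more than one fine state. Then σ(J(μ)) = (1 − 1/(σ((I−Π(μ))(I−P̂)^{−1}(I−Π(μ))) \ {0})) ∪ {0}; i.e., the nonzero eigenvalues of J(μ) are exactly the numbers 1 − 1/α where α ranges over the nonzero eigenvalues of (I−Π(μ))(I−P̂)^{−1}(I−Π(μ)), and 0 ∈ σ(J(μ)). -/

import Mathlib

open Matrix BigOperators

/-- A matrix is column stochastic: nonnegative entries, each column sums to one. -/
def ColStoch {m : Type*} [Fintype m] (M : Matrix m m ℝ) : Prop :=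
  (∀ i j, 0 ≤ M i j) ∧ ∀ j, ∑ i, M i j = 1

/-- Irreducibility of a matrix via its pattern of nonzero entries:
the associated directed graph is strongly connected. -/
def Irred {m : Type*} [Fintype m] [DecidableEq m] (M : Matrix m m ℝ) : Prop :=
  ∀ i j, ∃ k : ℕ, 0 < k ∧ (M ^ k) i j ≠ 0

/-- Weighted inner product `⟨x,y⟩_w = ∑ i, x i * y i * w i`. -/
def innerW {m : Type*} [Fintype m] (w x y : m → ℝ) : ℝ := ∑ i, x i * y i * w i

/-- Weighted `ℓ²(w)` norm. -/
noncomputable def normW {m : Type*} [Fintype m] (w x : m → ℝ) : ℝ :=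
  Real.sqrt (innerW w x x)

/-- Operator norm of a matrix with respect to the `ℓ²(w)` norm. -/
noncomputable def opNormW {m : Type*} [Fintype m] (w : m → ℝ) (M : Matrix m m ℝ) : ℝ :=
  sInf {c | 0 ≤ c ∧ ∀ x, normW w (M.mulVec x) ≤ c * normW w x}

/-- Aggregation operator for the partition `{f⁻¹(i)}` of `Fin N`. -/
def Agg {N n : ℕ} (f : Fin N → Fin n) : Matrix (Fin n) (Fin N) ℝ :=
  fun i x => if f x = i then 1 else 0

/-- Disaggregation operator for the partition `{f⁻¹(i)}` and weight vector ν. -/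
noncomputable def Disagg {N n : ℕ} (f : Fin N → Fin n) (ν : Fin N → ℝ) :
    Matrix (Fin N) (Fin n) ℝ :=
  fun j i => if f j = i then ν j / (Agg f).mulVec ν i else 0

/-- Coarse approximation `C(ν) = A P D(ν)`. -/
noncomputable def CoarseC {N n : ℕ} (P : Matrix (Fin N) (Fin N) ℝ) (f : Fin N → Fin n)
    (ν : Fin N → ℝ) : Matrix (Fin n) (Fin n) ℝ := Agg f * P * Disagg f ν

/-- `P̂ = P - μ 𝟙ᵀ`. -/
def hatP {N : ℕ} (P : Matrix (Fin N) (Fin N) ℝ) (μ : Fin N → ℝ) :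
    Matrix (Fin N) (Fin N) ℝ := P - vecMulVec μ 1

/-- Coarse projection `S(ν) = D(ν)[A(I-P+μ𝟙ᵀ)D(ν)]⁻¹ A(I-P+μ𝟙ᵀ)`. -/
noncomputable def CoarseS {N n : ℕ} (P : Matrix (Fin N) (Fin N) ℝ) (f : Fin N → Fin n)
    (μ ν : Fin N → ℝ) : Matrix (Fin N) (Fin N) ℝ :=
  Disagg f ν * (Agg f * (1 - P + vecMulVec μ 1) * Disagg f ν)⁻¹ *
    (Agg f * (1 - P + vecMulVec μ 1))

/-- Orthogonal coarse projection `Π(ν) = D(ν) A`. -/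
noncomputable def PiProj {N n : ℕ} (f : Fin N → Fin n) (ν : Fin N → ℝ) :
    Matrix (Fin N) (Fin N) ℝ := Disagg f ν * Agg f

/-- Error propagation operator `J(ν) = P̂ (I - S(ν))`. -/
noncomputable def Jop {N n : ℕ} (P : Matrix (Fin N) (Fin N) ℝ) (f : Fin N → Fin n)
    (μ ν : Fin N → ℝ) : Matrix (Fin N) (Fin N) ℝ := hatP P μ * (1 - CoarseS P f μ ν)

/-- Spectrum (set of complex eigenvalues) of a real matrix. -/
noncomputable def specC {N : ℕ} (M : Matrix (Fin N) (Fin N) ℝ) : Set ℂ :=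
  spectrum ℂ (M.map (Complex.ofReal))

/-- Spectral radius of a real matrix. -/
noncomputable def specRad {N : ℕ} (M : Matrix (Fin N) (Fin N) ℝ) : ℝ :=
  sSup ((fun z : ℂ => ‖z‖) '' specC M)

/-- The `ℓ²(1/μ)`-adjoint `diag(μ) Mᵀ diag(1/μ)`. -/
noncomputable def adjW {N : ℕ} (μ : Fin N → ℝ) (M : Matrix (Fin N) (Fin N) ℝ) :
    Matrix (Fin N) (Fin N) ℝ :=
  Matrix.diagonal μ * Mᵀ * Matrix.diagonal (fun i => (μ i)⁻¹)

/-- The ε-inner product `⟨x,y⟩_ε = ⟨x,(I-Π(μ))y⟩_{1/μ} + ε ⟨x,Π(μ)y⟩_{1/μ}`. -/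
noncomputable def innerEps {N n : ℕ} (f : Fin N → Fin n) (μ : Fin N → ℝ) (ε : ℝ)
    (x y : Fin N → ℝ) : ℝ :=
  innerW (fun i => (μ i)⁻¹) x ((1 - PiProj f μ).mulVec y) +
    ε * innerW (fun i => (μ i)⁻¹) x ((PiProj f μ).mulVec y)

/-- The ε-norm. -/
noncomputable def normEps {N n : ℕ} (f : Fin N → Fin n) (μ : Fin N → ℝ) (ε : ℝ)
    (x : Fin N → ℝ) : ℝ := Real.sqrt (innerEps f μ ε x x)

/-- Operator norm induced by the ε-norm. -/
noncomputable def opNormEps {N n : ℕ} (f : Fin N → Fin n) (μ : Fin N → ℝ) (ε : ℝ)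
    (M : Matrix (Fin N) (Fin N) ℝ) : ℝ :=
  sInf {c | 0 ≤ c ∧ ∀ x, normEps f μ ε (M.mulVec x) ≤ c * normEps f μ ε x}
lemma pow_nonneg_entries {m : Type*} [Fintype m] [DecidableEq m] {M : Matrix m m ℝ}
    (h : ∀ i j, 0 ≤ M i j) (k : ℕ) : ∀ i j, 0 ≤ (M ^ k) i j := by
  induction k with
  | zero => intro i j; by_cases hij : i = j <;> simp [Matrix.one_apply, hij]
  | succ k ih =>
    intro i j
    rw [pow_succ, Matrix.mul_apply]
    exact Finset.sum_nonneg fun l _ => mul_nonneg (ih i l) (h l j)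

/-- Perron-Frobenius uniqueness: a complex fixed vector of an irreducible
column-stochastic matrix is a multiple of the positive fixed vector. -/
lemma pf_unique {m : Type*} [Fintype m] [DecidableEq m] [Nonempty m]
    (M : Matrix m m ℝ) (hM : ColStoch M) (hirr : Irred M)
    (ν : m → ℝ) (hν : ∀ i, 0 < ν i) (hfix : M.mulVec ν = ν)
    (x : m → ℂ) (hx : (M.map Complex.ofReal).mulVec x = x) :
    ∃ c : ℂ, x = fun i => c * (ν i : ℂ) := by
  classical
  obtain ⟨i0⟩ := ‹Nonempty m›
  set c : ℂ := x i0 / (ν i0 : ℂ) with hc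
  set z : m → ℂ := fun i => x i - c * (ν i : ℂ) with hzdef
  refine ⟨c, ?_⟩
  -- it suffices to show z = 0
  suffices hz0 : ∀ i, z i = 0 by
    funext i; have := hz0 i; simp only [hzdef] at this; linear_combination this
  -- ν as complex fixed vector
  have hνfix : (M.map Complex.ofReal).mulVec (fun i => (ν i : ℂ)) = fun i => (ν i : ℂ) := by
    funext i
    have := congrFun hfix i
    simp only [Matrix.mulVec, dotProduct, Matrix.map_apply] at this ⊢
    push_cast
    exact_mod_cast congrArg (Complex.ofReal) this
  -- z is a fixed vector
  have hz : (M.map Complex.ofReal).mulVec z = z := by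
    have : z = x - c • (fun i => (ν i : ℂ)) := by funext i; simp [hzdef, smul_eq_mul]
    rw [this, Matrix.mulVec_sub, Matrix.mulVec_smul, hx, hνfix]
  set y : m → ℝ := fun i => ‖z i‖ with hydef
  have hynn : ∀ i, 0 ≤ y i := fun i => norm_nonneg _
  -- pointwise inequality
  have h1 : ∀ i, y i ≤ M.mulVec y i := by
    intro i
    have := congrFun hz i
    calc y i = ‖(M.map Complex.ofReal).mulVec z i‖ := by rw [this]
    _ ≤ ∑ j, ‖(M i j : ℂ) * z j‖ := by
        simp only [Matrix.mulVec, dotProduct, Matrix.map_apply]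
        exact norm_sum_le _ _
    _ = M.mulVec y i := by
        simp only [Matrix.mulVec, dotProduct]
        refine Finset.sum_congr rfl fun j _ => ?_
        rw [norm_mul, Complex.norm_real, Real.norm_eq_abs, abs_of_nonneg (hM.1 i j)]
  -- equal sums
  have h2 : ∑ i, M.mulVec y i = ∑ i, y i := by
    simp only [Matrix.mulVec, dotProduct]
    rw [Finset.sum_comm]
    exact Finset.sum_congr rfl fun j _ => by rw [← Finset.sum_mul, hM.2 j, one_mul]
  -- hence equality pointwise
  have h3 : M.mulVec y = y := by
    funext i
    by_contra hne
    have hlt : y i < M.mulVec y i := lt_of_le_of_ne (h1 i) (Ne.symm hne)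
    have : ∑ i, y i < ∑ i, M.mulVec y i :=
      Finset.sum_lt_sum (fun j _ => h1 j) ⟨i, Finset.mem_univ i, hlt⟩
    linarith
  -- powers fix y
  have h4 : ∀ k : ℕ, (M ^ k).mulVec y = y := by
    intro k
    induction k with
    | zero => simp
    | succ k ih => rw [pow_succ', ← Matrix.mulVec_mulVec, ih, h3]
  -- y i0 = 0
  have h5 : y i0 = 0 := by
    have hν0 : (ν i0 : ℂ) ≠ 0 := by exact_mod_cast (hν i0).ne'
    have : z i0 = 0 := by
      simp only [hzdef, hc]
      field_simp
      ring
    simp [hydef, this]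
  -- propagate zero
  intro j
  obtain ⟨k, hk, hkne⟩ := hirr i0 j
  have h6 : ∑ l, (M ^ k) i0 l * y l = 0 := by
    have := congrFun (h4 k) i0
    simp only [Matrix.mulVec, dotProduct] at this
    rw [this, h5]
  have h7 : ∀ l ∈ Finset.univ, 0 ≤ (M ^ k) i0 l * y l := fun l _ =>
    mul_nonneg (pow_nonneg_entries hM.1 k i0 l) (hynn l)
  have h8 : (M ^ k) i0 j * y j = 0 :=
    (Finset.sum_eq_zero_iff_of_nonneg h7).mp h6 j (Finset.mem_univ j)
  have h9 : y j = 0 := by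
    rcases mul_eq_zero.mp h8 with h | h
    · exact absurd h hkne
    · exact h
  simpa [hydef] using h9

lemma mem_spec_iff {m : Type*} [Fintype m] [DecidableEq m] (M : Matrix m m ℂ) (a : ℂ) :
    a ∈ spectrum ℂ M ↔ ∃ x, x ≠ 0 ∧ M.mulVec x = a • x := by
  rw [spectrum.mem_iff, Matrix.isUnit_iff_isUnit_det, isUnit_iff_ne_zero, not_ne_iff,
    ← Matrix.exists_mulVec_eq_zero_iff, Algebra.algebraMap_eq_smul_one]
  constructor
  · rintro ⟨v, hv, h⟩
    refine ⟨v, hv, ?_⟩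
    rw [Matrix.sub_mulVec, Matrix.smul_mulVec, Matrix.one_mulVec, sub_eq_zero] at h
    exact h.symm
  · rintro ⟨v, hv, h⟩
    refine ⟨v, hv, ?_⟩
    rw [Matrix.sub_mulVec, Matrix.smul_mulVec, Matrix.one_mulVec, sub_eq_zero, h]

lemma vmv_mulVec {m : Type*} [Fintype m] (ν : m → ℝ) (x : m → ℂ) :
    ((vecMulVec ν 1).map Complex.ofReal).mulVec x = fun i => (ν i : ℂ) * ∑ j, x j := by
  funext i
  simp only [Matrix.mulVec, dotProduct, Matrix.map_apply, Matrix.vecMulVec_apply,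
    Pi.one_apply, mul_one, Complex.ofReal_mul]
  rw [Finset.mul_sum]

lemma colsum_cplx {m : Type*} [Fintype m] (M : Matrix m m ℝ)
    (hM : ∀ j, ∑ i, M i j = 1) (x : m → ℂ) :
    ∑ i, (M.map Complex.ofReal).mulVec x i = ∑ j, x j := by
  simp only [Matrix.mulVec, dotProduct, Matrix.map_apply]
  rw [Finset.sum_comm]
  refine Finset.sum_congr rfl fun j _ => ?_
  rw [← Finset.sum_mul]
  norm_cast
  rw [hM j, Complex.ofReal_one, one_mul]

/-- Kernel triviality of `(I - M + ν 𝟙ᵀ)` over ℂ. -/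
lemma ker_triv {m : Type*} [Fintype m] [DecidableEq m] [Nonempty m]
    (M : Matrix m m ℝ) (hM : ColStoch M) (hirr : Irred M)
    (ν : m → ℝ) (hν : ∀ i, 0 < ν i) (hνsum : ∑ i, ν i = 1) (hfix : M.mulVec ν = ν)
    (x : m → ℂ)
    (hx : (((1 : Matrix m m ℝ) - M + vecMulVec ν 1).map Complex.ofReal).mulVec x = 0) :
    x = 0 := by
  classical
  set s : ℂ := ∑ j, x j with hs
  have hsplit : x - (M.map Complex.ofReal).mulVec x + (fun i => (ν i : ℂ) * s) = 0 := by
    rw [← hx]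
    have : ((1 : Matrix m m ℝ) - M + vecMulVec ν 1).map Complex.ofReal
        = 1 - M.map Complex.ofReal + (vecMulVec ν 1).map Complex.ofReal := by
      ext i j
      by_cases hij : i = j <;>
        simp [Matrix.map_apply, Matrix.one_apply, hij]
    rw [this, Matrix.add_mulVec, Matrix.sub_mulVec, Matrix.one_mulVec, vmv_mulVec]
  -- sum the identity
  have hsum : s - s + s = 0 := by
    have := congrArg (fun v => ∑ i, v i) hsplit
    simp only [Pi.add_apply, Pi.sub_apply, Pi.zero_apply, Finset.sum_add_distrib,
      Finset.sum_sub_distrib, Finset.sum_const_zero] at this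
    rw [colsum_cplx M hM.2 x, ← hs] at this
    rw [← this, hs]
    congr 1
    rw [← Finset.sum_mul]
    norm_cast
    rw [hνsum, Complex.ofReal_one, one_mul]
  have hs0 : s = 0 := by linear_combination hsum
  have hfx : (M.map Complex.ofReal).mulVec x = x := by
    have := hsplit
    rw [hs0] at this
    funext i
    have := congrFun this i
    simp only [Pi.add_apply, Pi.sub_apply, Pi.zero_apply, mul_zero, add_zero] at this
    linear_combination -this
  obtain ⟨c, hcx⟩ := pf_unique M hM hirr ν hν hfix x hfx
  have hc0 : c = 0 := by
    have : s = c := by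
      rw [hs, hcx, ← Finset.mul_sum]
      norm_cast
      rw [hνsum, Complex.ofReal_one, mul_one]
    rw [← this, hs0]
  rw [hcx, hc0]
  funext i; simp

section AggDisagg
variable {N n : ℕ} (f : Fin N → Fin n) (μ : Fin N → ℝ)

lemma agg_apply (i : Fin n) (j : Fin N) : Agg f i j = if f j = i then 1 else 0 := rfl

lemma disagg_apply (ν : Fin N → ℝ) (j : Fin N) (i : Fin n) :
    Disagg f ν j i = if f j = i then ν j / (Agg f).mulVec ν i else 0 := rfl

lemma aggMu_apply (i : Fin n) : (Agg f).mulVec μ i = ∑ j, if f j = i then μ j else 0 := by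
  simp only [Matrix.mulVec, dotProduct, Agg, ite_mul, one_mul, zero_mul]

lemma aggMu_pos (hf : Function.Surjective f) (hμpos : ∀ i, 0 < μ i) :
    ∀ i, 0 < (Agg f).mulVec μ i := by
  intro i
  rw [aggMu_apply]
  obtain ⟨j0, hj0⟩ := hf i
  refine Finset.sum_pos' (fun j _ => by by_cases h : f j = i <;> simp [h, (hμpos j).le])
    ⟨j0, Finset.mem_univ j0, by rw [if_pos hj0]; exact hμpos j0⟩

lemma agg_disagg (hf : Function.Surjective f) (hμpos : ∀ i, 0 < μ i) :
    Agg f * Disagg f μ = 1 := by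
  ext i k
  rw [Matrix.mul_apply, Matrix.one_apply]
  by_cases hik : i = k
  · subst hik
    rw [if_pos rfl]
    have : ∀ j, Agg f i j * Disagg f μ j i
        = (if f j = i then μ j else 0) / (Agg f).mulVec μ i := by
      intro j
      rw [agg_apply, disagg_apply]
      by_cases h : f j = i <;> simp [h]
    rw [Finset.sum_congr rfl fun j _ => this j, ← Finset.sum_div, ← aggMu_apply]
    exact div_self (aggMu_pos f μ hf hμpos i).ne'
  · rw [if_neg hik]
    refine Finset.sum_eq_zero fun j _ => ?_
    rw [agg_apply, disagg_apply]
    by_cases h1 : f j = i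
    · rw [if_pos h1, if_neg (fun h2 => hik (h1.symm.trans h2)), mul_zero]
    · rw [if_neg h1, zero_mul]
  
lemma disagg_nonneg (hf : Function.Surjective f) (hμpos : ∀ i, 0 < μ i) :
    ∀ j i, 0 ≤ Disagg f μ j i := by
  intro j i
  rw [disagg_apply]
  by_cases h : f j = i
  · rw [if_pos h]
    exact le_of_lt (div_pos (hμpos j) (aggMu_pos f μ hf hμpos i))
  · rw [if_neg h]

lemma agg_nonneg : ∀ i j, 0 ≤ Agg f i j := by
  intro i j; rw [agg_apply]; by_cases h : f j = i <;> simp [h]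

lemma disagg_colsum (hf : Function.Surjective f) (hμpos : ∀ i, 0 < μ i) :
    ∀ i, ∑ j, Disagg f μ j i = 1 := by
  intro i
  simp only [disagg_apply]
  have : ∀ j, (if f j = i then μ j / (Agg f).mulVec μ i else 0)
      = (if f j = i then μ j else 0) / (Agg f).mulVec μ i := by
    intro j; by_cases h : f j = i <;> simp [h]
  rw [Finset.sum_congr rfl fun j _ => this j, ← Finset.sum_div, ← aggMu_apply]
  exact div_self (aggMu_pos f μ hf hμpos i).ne'

lemma agg_colsum : ∀ j, ∑ i, Agg f i j = 1 := by
  intro j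
  simp only [agg_apply]
  rw [Finset.sum_ite_eq Finset.univ (f j) (fun _ => (1:ℝ))]
  simp

lemma disagg_aggMu (hf : Function.Surjective f) (hμpos : ∀ i, 0 < μ i) :
    (Disagg f μ).mulVec ((Agg f).mulVec μ) = μ := by
  funext j
  set g := (Agg f).mulVec μ with hg
  show ∑ i, Disagg f μ j i * g i = μ j
  simp only [disagg_apply, ← hg]
  simp only [ite_mul, zero_mul]
  rw [Finset.sum_ite_eq Finset.univ (f j) (fun i => μ j / g i * g i)]
  simp only [Finset.mem_univ, if_true]
  exact div_mul_cancel₀ (μ j) (aggMu_pos f μ hf hμpos (f j)).ne'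

lemma agg_vmv_disagg (hf : Function.Surjective f) (hμpos : ∀ i, 0 < μ i) :
    Agg f * vecMulVec μ (1 : Fin N → ℝ) * Disagg f μ = vecMulVec ((Agg f).mulVec μ) 1 := by
  ext i k
  rw [Matrix.mul_apply, Matrix.vecMulVec_apply, Pi.one_apply, mul_one]
  have h1 : ∀ j : Fin N, (Agg f * vecMulVec μ (1 : Fin N → ℝ)) i j = (Agg f).mulVec μ i := by
    intro j
    rw [Matrix.mul_apply]
    simp only [Matrix.vecMulVec_apply, Pi.one_apply, mul_one]
    rfl
  rw [Finset.sum_congr rfl fun j _ => by rw [h1 j], ← Finset.mul_sum,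
    disagg_colsum f μ hf hμpos k, mul_one]

end AggDisagg

section Coarse
variable {N n : ℕ} (P : Matrix (Fin N) (Fin N) ℝ) (f : Fin N → Fin n) (μ : Fin N → ℝ)

lemma mul_entries_nonneg {a b c : Type*} [Fintype a] [Fintype b] [Fintype c]
    {M : Matrix a b ℝ} {L : Matrix b c ℝ} (hM : ∀ i j, 0 ≤ M i j) (hL : ∀ i j, 0 ≤ L i j) :
    ∀ i j, 0 ≤ (M * L) i j := fun i j => by
  rw [Matrix.mul_apply]
  exact Finset.sum_nonneg fun l _ => mul_nonneg (hM i l) (hL l j)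

lemma mul_colsum {a b c : Type*} [Fintype a] [Fintype b] [Fintype c]
    {M : Matrix a b ℝ} {L : Matrix b c ℝ} (hM : ∀ j, ∑ i, M i j = 1)
    (hL : ∀ j, ∑ i, L i j = 1) : ∀ j, ∑ i, (M * L) i j = 1 := by
  intro j
  simp only [Matrix.mul_apply]
  rw [Finset.sum_comm]
  rw [Finset.sum_congr rfl fun l _ => by rw [← Finset.sum_mul, hM l, one_mul]]
  exact hL j

lemma coarse_colstoch (hP : ColStoch P) (hf : Function.Surjective f) (hμpos : ∀ i, 0 < μ i) :
    ColStoch (Agg f * P * Disagg f μ) := by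
  constructor
  · exact mul_entries_nonneg (mul_entries_nonneg (agg_nonneg f) hP.1)
      (disagg_nonneg f μ hf hμpos)
  · exact mul_colsum (mul_colsum (agg_colsum f) hP.2) (disagg_colsum f μ hf hμpos)

lemma coarse_fix (hf : Function.Surjective f) (hμpos : ∀ i, 0 < μ i)
    (hinv : P.mulVec μ = μ) :
    (Agg f * P * Disagg f μ).mulVec ((Agg f).mulVec μ) = (Agg f).mulVec μ := by
  rw [← Matrix.mulVec_mulVec, ← Matrix.mulVec_mulVec, disagg_aggMu f μ hf hμpos, hinv]

lemma aggMu_sum (hμsum : ∑ i, μ i = 1) : ∑ i, (Agg f).mulVec μ i = 1 := by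
  simp only [aggMu_apply]
  rw [Finset.sum_comm]
  rw [← hμsum]
  refine Finset.sum_congr rfl fun j _ => ?_
  rw [Finset.sum_ite_eq Finset.univ (f j) (fun _ => μ j)]
  simp

lemma coarse_irred (hP : ColStoch P) (hirr : Irred P) (hf : Function.Surjective f)
    (hμpos : ∀ i, 0 < μ i) [Nonempty (Fin N)] :
    Irred (Agg f * P * Disagg f μ) := by
  classical
  set A := Agg f with hA
  set Dm := Disagg f μ with hDm
  set Pp := Dm * A with hPp
  have hPpnn : ∀ i j, 0 ≤ Pp i j :=
    mul_entries_nonneg (disagg_nonneg f μ hf hμpos) (agg_nonneg f)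
  have hPpdiag : ∀ l, 0 < Pp l l := by
    intro l
    rw [hPp, Matrix.mul_apply]
    refine Finset.sum_pos' (fun i _ => mul_nonneg (disagg_nonneg f μ hf hμpos l i)
      (agg_nonneg f i l)) ⟨f l, Finset.mem_univ _, ?_⟩
    rw [hDm, hA, disagg_apply, agg_apply, if_pos rfl, if_pos rfl, mul_one]
    exact div_pos (hμpos l) (aggMu_pos f μ hf hμpos (f l))
  set eps : ℝ := Finset.univ.inf' Finset.univ_nonempty (fun l => Pp l l) with heps
  have hepspos : 0 < eps := by
    rw [heps]
    exact (Finset.lt_inf'_iff _).mpr fun l _ => hPpdiag l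
  have hepsle : ∀ l, eps ≤ Pp l l := fun l => Finset.inf'_le _ (Finset.mem_univ l)
  -- claim 1
  have hclaim1 : ∀ i l, eps * P i l ≤ (P * Pp) i l := by
    intro i l
    calc eps * P i l ≤ P i l * Pp l l := by
          rw [mul_comm]
          exact mul_le_mul_of_nonneg_left (hepsle l) (hP.1 i l)
    _ ≤ (P * Pp) i l := by
          rw [Matrix.mul_apply]
          exact Finset.single_le_sum (f := fun j => P i j * Pp j l)
            (fun j _ => mul_nonneg (hP.1 i j) (hPpnn j l)) (Finset.mem_univ l)
  have hPPpnn : ∀ i j, 0 ≤ (P * Pp) i j := mul_entries_nonneg hP.1 hPpnn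
  -- claim 2
  have hclaim2 : ∀ k : ℕ, ∀ i j, eps ^ k * (P ^ (k+1)) i j ≤ ((P * Pp) ^ k * P) i j := by
    intro k
    induction k with
    | zero => intro i j; simp
    | succ k ih =>
      intro i j
      have hlhs : (((P * Pp) ^ (k+1) : Matrix (Fin N) (Fin N) ℝ) * P)
          = (P * Pp) * ((P * Pp) ^ k * P) := by
        rw [pow_succ', Matrix.mul_assoc]
      rw [hlhs, Matrix.mul_apply]
      have hterm : ∀ l, (eps * P i l) * (eps ^ k * (P ^ (k+1)) l j)
          ≤ (P * Pp) i l * ((P * Pp) ^ k * P) l j := by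
        intro l
        refine mul_le_mul (hclaim1 i l) (ih l j) ?_ (hPPpnn i l)
        exact mul_nonneg (by positivity) (pow_nonneg_entries hP.1 (k+1) l j)
      calc eps ^ (k+1) * (P ^ (k+2)) i j
          = ∑ l, (eps * P i l) * (eps ^ k * (P ^ (k+1)) l j) := by
            have : (P ^ (k+2) : Matrix (Fin N) (Fin N) ℝ) = P * P ^ (k+1) := by
              rw [pow_succ']
            rw [this, Matrix.mul_apply, Finset.mul_sum]
            refine Finset.sum_congr rfl fun l _ => ?_
            ring
      _ ≤ ∑ l, (P * Pp) i l * ((P * Pp) ^ k * P) l j :=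
            Finset.sum_le_sum fun l _ => hterm l
  -- claim 3
  have hclaim3 : ∀ k : ℕ, (A * P * Dm) ^ (k+1) = A * ((P * Pp) ^ k * P) * Dm := by
    intro k
    induction k with
    | zero => simp
    | succ k ih =>
      have : ((A * P * Dm) ^ (k+2) : Matrix (Fin n) (Fin n) ℝ)
          = (A * P * Dm) ^ (k+1) * (A * P * Dm) := by rw [pow_succ]
      rw [this, ih]
      have hpow : ((P * Pp) ^ (k+1) : Matrix (Fin N) (Fin N) ℝ)
          = (P * Pp) ^ k * P * Pp := by rw [pow_succ, Matrix.mul_assoc]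
      rw [hpow, hPp]
      simp only [Matrix.mul_assoc]
  -- conclusion
  intro a b
  obtain ⟨ia, hia⟩ := hf a
  obtain ⟨jb, hjb⟩ := hf b
  obtain ⟨k, hk, hkne⟩ := hirr ia jb
  obtain ⟨k', rfl⟩ : ∃ k', k = k' + 1 := ⟨k - 1, (Nat.succ_pred_eq_of_pos hk).symm⟩
  refine ⟨k' + 1, Nat.succ_pos k', ?_⟩
  have hMnn : ∀ i j, 0 ≤ ((P * Pp) ^ k' * P) i j :=
    mul_entries_nonneg (pow_nonneg_entries hPPpnn k') hP.1
  have hMlow : 0 < ((P * Pp) ^ k' * P) ia jb := by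
    have h1 : 0 < (P ^ (k'+1)) ia jb :=
      lt_of_le_of_ne (pow_nonneg_entries hP.1 (k'+1) ia jb) (Ne.symm hkne)
    calc (0:ℝ) < eps ^ k' * (P ^ (k'+1)) ia jb := by positivity
    _ ≤ ((P * Pp) ^ k' * P) ia jb := hclaim2 k' ia jb
  rw [hclaim3 k']
  have hfinal : 0 < (A * ((P * Pp) ^ k' * P) * Dm) a b := by
    set M := (P * Pp) ^ k' * P with hM
    have hMDm : 0 < (M * Dm) ia b := by
      rw [Matrix.mul_apply]
      refine Finset.sum_pos' (fun j _ => mul_nonneg (hMnn ia j)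
        (disagg_nonneg f μ hf hμpos j b)) ⟨jb, Finset.mem_univ _, ?_⟩
      refine mul_pos hMlow ?_
      rw [hDm, disagg_apply, if_pos hjb]
      exact div_pos (hμpos jb) (aggMu_pos f μ hf hμpos b)
    have : (A * M * Dm) a b = (A * (M * Dm)) a b := by rw [Matrix.mul_assoc]
    rw [this, Matrix.mul_apply]
    refine Finset.sum_pos' (fun i _ => mul_nonneg (agg_nonneg f a i)
      (mul_entries_nonneg hMnn (disagg_nonneg f μ hf hμpos) i b)) ⟨ia, Finset.mem_univ _, ?_⟩
    rw [hA, agg_apply, if_pos hia, one_mul]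
    exact hMDm
  exact hfinal.ne'
end Coarse



section Key

variable {m mc : Type*} [Fintype m] [DecidableEq m] [Fintype mc] [DecidableEq mc]

lemma key_equiv (Ph K Ki : Matrix m m ℂ) (D : Matrix m mc ℂ) (A : Matrix mc m ℂ)
    (B Bi : Matrix mc mc ℂ)
    (hK : K = 1 - Ph) (hKKi : K * Ki = 1) (hKiK : Ki * K = 1)
    (hBBi : B * Bi = 1) (hBiB : Bi * B = 1)
    (hAD : A * D = 1) (hB : B = A * K * D)
    (lam : ℂ) (hlam0 : lam ≠ 0) :
    (∃ x, x ≠ 0 ∧ (Ph * (1 - D * Bi * (A * K))).mulVec x = lam • x) ↔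
      (lam ≠ 1 ∧ ∃ z, z ≠ 0 ∧
        ((1 - D * A) * Ki * (1 - D * A)).mulVec z = (1 - lam)⁻¹ • z) := by
  classical
  -- vector-level identities
  have wAD : ∀ v : mc → ℂ, A *ᵥ D *ᵥ v = v := fun v => by
    rw [Matrix.mulVec_mulVec, hAD, Matrix.one_mulVec]
  have wKKi : ∀ v : m → ℂ, K *ᵥ Ki *ᵥ v = v := fun v => by
    rw [Matrix.mulVec_mulVec, hKKi, Matrix.one_mulVec]
  have wKiK : ∀ v : m → ℂ, Ki *ᵥ K *ᵥ v = v := fun v => by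
    rw [Matrix.mulVec_mulVec, hKiK, Matrix.one_mulVec]
  have wBBi : ∀ v : mc → ℂ, B *ᵥ Bi *ᵥ v = v := fun v => by
    rw [Matrix.mulVec_mulVec, hBBi, Matrix.one_mulVec]
  have wBiB : ∀ v : mc → ℂ, Bi *ᵥ B *ᵥ v = v := fun v => by
    rw [Matrix.mulVec_mulVec, hBiB, Matrix.one_mulVec]
  have wB : ∀ v : mc → ℂ, B *ᵥ v = A *ᵥ K *ᵥ D *ᵥ v := fun v => by
    rw [hB]
    simp only [← Matrix.mulVec_mulVec]
  have wS : ∀ v : m → ℂ, (D * Bi * (A * K)) *ᵥ v = D *ᵥ Bi *ᵥ A *ᵥ K *ᵥ v := fun v => by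
    simp only [← Matrix.mulVec_mulVec]
  have wPi : ∀ v : m → ℂ, (D * A) *ᵥ v = D *ᵥ A *ᵥ v := fun v => by
    simp only [← Matrix.mulVec_mulVec]
  have wSD : ∀ v : mc → ℂ, (D * Bi * (A * K)) *ᵥ D *ᵥ v = D *ᵥ v := fun v => by
    rw [wS, ← wB, wBiB]
  have wSS : ∀ v : m → ℂ, (D * Bi * (A * K)) *ᵥ (D * Bi * (A * K)) *ᵥ v
      = (D * Bi * (A * K)) *ᵥ v := fun v => by
    rw [wS v, wSD]
  have wSPi : ∀ v : m → ℂ, (D * Bi * (A * K)) *ᵥ (D * A) *ᵥ v = (D * A) *ᵥ v := fun v => by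
    rw [wPi, wSD]
  have wPiS : ∀ v : m → ℂ, (D * A) *ᵥ (D * Bi * (A * K)) *ᵥ v
      = (D * Bi * (A * K)) *ᵥ v := fun v => by
    rw [wS, wPi, wAD]
  have wPiPi : ∀ v : m → ℂ, (D * A) *ᵥ (D * A) *ᵥ v = (D * A) *ᵥ v := fun v => by
    rw [wPi, wPi, wAD]
  have wAS : ∀ v : m → ℂ, A *ᵥ (D * Bi * (A * K)) *ᵥ v = Bi *ᵥ A *ᵥ K *ᵥ v := fun v => by
    rw [wS, wAD]
  have wKv : ∀ v : m → ℂ, K *ᵥ v = v - Ph *ᵥ v := fun v => by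
    rw [hK, Matrix.sub_mulVec, Matrix.one_mulVec]
  have wAPhD : ∀ v : mc → ℂ, A *ᵥ Ph *ᵥ D *ᵥ v = v - B *ᵥ v := fun v => by
    have h1 : Ph *ᵥ D *ᵥ v = D *ᵥ v - K *ᵥ D *ᵥ v := by
      rw [wKv (D *ᵥ v)]; abel
    rw [h1, Matrix.mulVec_sub, wAD, wB]
  -- J action
  have wJ : ∀ v : m → ℂ, (Ph * (1 - D * Bi * (A * K))) *ᵥ v
      = Ph *ᵥ (v - (D * Bi * (A * K)) *ᵥ v) := fun v => by
    rw [← Matrix.mulVec_mulVec, Matrix.sub_mulVec, Matrix.one_mulVec]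
  have wQ : ∀ v : m → ℂ, ((1 - D * A) * Ki * (1 - D * A)) *ᵥ v
      = Ki *ᵥ (v - (D * A) *ᵥ v) - (D * A) *ᵥ Ki *ᵥ (v - (D * A) *ᵥ v) := fun v => by
    simp only [← Matrix.mulVec_mulVec, Matrix.sub_mulVec, Matrix.one_mulVec]
  set S : Matrix m m ℂ := D * Bi * (A * K) with hSdef
  set Pi : Matrix m m ℂ := D * A with hPidef
  constructor
  · -- forward direction
    rintro ⟨x, hx0, hx⟩
    rw [wJ] at hx
    have hPh : Ph *ᵥ x - Ph *ᵥ (S *ᵥ x) = lam • x := by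
      rw [← Matrix.mulVec_sub]; exact hx
    -- lam ≠ 1, via the kernel argument
    have hlam1 : lam ≠ 1 := by
      rintro rfl
      rw [one_smul] at hPh
      set w : mc → ℂ := Bi *ᵥ A *ᵥ K *ᵥ x with hw
      have hSx : S *ᵥ x = D *ᵥ w := by rw [hw, wS]
      have hAKx : A *ᵥ K *ᵥ x = B *ᵥ w := by rw [hw, wBBi]
      have hKx : K *ᵥ x = -(Ph *ᵥ (S *ᵥ x)) := by
        have h6 := congrArg (fun t => t - Ph *ᵥ x) hPh
        rw [wKv, ← h6]
        abel
      have h2 : B *ᵥ w = -(A *ᵥ Ph *ᵥ D *ᵥ w) := by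
        rw [← hAKx, hKx, hSx, Matrix.mulVec_neg]
      rw [wAPhD, neg_sub] at h2
      have hw0 : w = 0 := by
        have h3 : B *ᵥ w + w = B *ᵥ w := eq_sub_iff_add_eq.mp h2
        have h4 := congrArg (fun t => t - B *ᵥ w) h3
        simpa using h4
      have hKx0 : K *ᵥ x = 0 := by
        rw [hKx, hSx, hw0, Matrix.mulVec_zero, Matrix.mulVec_zero, neg_zero]
      exact hx0 (by rw [← wKiK x, hKx0, Matrix.mulVec_zero])
    refine ⟨hlam1, ?_⟩
    set u : m → ℂ := x - S *ᵥ x with hu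
    have hPhu : Ph *ᵥ u = lam • x := hx
    have hune : u ≠ 0 := by
      intro h
      have h5 := hPhu
      rw [h, Matrix.mulVec_zero] at h5
      exact hx0 ((smul_eq_zero.mp h5.symm).resolve_left hlam0)
    have hSu : S *ᵥ u = 0 := by
      rw [hu, Matrix.mulVec_sub, wSS, sub_self]
    have hGu : Ph *ᵥ u - S *ᵥ Ph *ᵥ u = lam • u := by
      rw [hPhu, Matrix.mulVec_smul, hu, smul_sub]
    set β : ℂ := 1 - lam with hβ
    clear_value β
    have hβ0 : β ≠ 0 := by rw [hβ]; exact sub_ne_zero.mpr (Ne.symm hlam1)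
    set z : m → ℂ := K *ᵥ u with hz
    have hzne : z ≠ 0 := by
      intro h
      exact hune (by rw [← wKiK u, ← hz, h, Matrix.mulVec_zero])
    have hAz : A *ᵥ z = 0 := by
      have h1 : A *ᵥ S *ᵥ u = 0 := by rw [hSu, Matrix.mulVec_zero]
      rw [wAS, ← hz] at h1
      have h2 := congrArg (fun t => B *ᵥ t) h1
      simp only [Matrix.mulVec_zero] at h2
      rw [wBBi] at h2
      exact h2
    have hPiz : Pi *ᵥ z = 0 := by rw [hPidef, wPi, hAz, Matrix.mulVec_zero]
    -- H u = β u
    have hH : z - S *ᵥ z = β • u := by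
      have h2 : S *ᵥ z = S *ᵥ u - S *ᵥ (Ph *ᵥ u) := by
        rw [hz, wKv u, Matrix.mulVec_sub]
      calc z - S *ᵥ z = (u - Ph *ᵥ u) - (S *ᵥ u - S *ᵥ (Ph *ᵥ u)) := by
            rw [h2, hz, wKv u]
      _ = u - (Ph *ᵥ u - S *ᵥ Ph *ᵥ u) := by rw [hSu]; abel
      _ = u - lam • u := by rw [hGu]
      _ = β • u := by rw [hβ, sub_smul, one_smul]
    -- derive the Q-eigenvector equation
    have h4 : z = β • (u - Pi *ᵥ u) := by
      have h5 := congrArg (fun t => t - Pi *ᵥ t) hH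
      rw [Matrix.mulVec_sub, hPiz, wPiS] at h5
      rw [Matrix.mulVec_smul, ← smul_sub] at h5
      calc z = z - S *ᵥ z - (0 - S *ᵥ z) := by abel
      _ = β • (u - Pi *ᵥ u) := h5
    refine ⟨z, hzne, ?_⟩
    rw [wQ]
    have hEz : z - Pi *ᵥ z = z := by rw [hPiz, sub_zero]
    have h7 : Ki *ᵥ z = u := by rw [hz, wKiK]
    rw [hEz, h7, h4, smul_smul, inv_mul_cancel₀ hβ0, one_smul]
  · -- backward direction
    rintro ⟨hlam1, z, hz0, hz⟩
    rw [wQ] at hz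
    set β : ℂ := 1 - lam with hβ
    clear_value β
    have hβ0 : β ≠ 0 := by rw [hβ]; exact sub_ne_zero.mpr (Ne.symm hlam1)
    -- Pi z = 0
    have hPiz : Pi *ᵥ z = 0 := by
      have h1 := congrArg (fun t => Pi *ᵥ t) hz
      rw [Matrix.mulVec_sub, wPiPi, sub_self, Matrix.mulVec_smul] at h1
      exact ((smul_eq_zero.mp h1.symm).resolve_left (inv_ne_zero hβ0))
    have hEz : z - Pi *ᵥ z = z := by rw [hPiz, sub_zero]
    rw [hEz] at hz
    set u : m → ℂ := Ki *ᵥ z with hu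
    have hu0 : u ≠ 0 := by
      intro h
      exact hz0 (by rw [← wKKi z, ← hu, h, Matrix.mulVec_zero])
    have hKu : K *ᵥ u = z := by rw [hu, wKKi]
    have hAz : A *ᵥ z = 0 := by
      have h2 : D *ᵥ A *ᵥ z = 0 := by rw [← wPi]; exact hPiz
      have h3 := congrArg (fun t => A *ᵥ t) h2
      simp only [Matrix.mulVec_zero] at h3
      rw [wAD] at h3
      exact h3
    have hSu : S *ᵥ u = 0 := by
      rw [wS, hKu, hAz, Matrix.mulVec_zero, Matrix.mulVec_zero]
    have hEu : u - Pi *ᵥ u = β⁻¹ • z := hz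
    have h8 : β • (u - Pi *ᵥ u) = z := by
      rw [hEu, smul_smul, mul_inv_cancel₀ hβ0, one_smul]
    have hSz : S *ᵥ z = z - β • u := by
      rw [← h8, Matrix.mulVec_smul, Matrix.mulVec_sub, hSu, wSPi, smul_sub, smul_sub,
        smul_zero]
      abel
    have hPhu : Ph *ᵥ u = u - z := by
      have h9 := wKv u
      rw [hKu] at h9
      rw [h9]
      abel
    have hSPhu : S *ᵥ Ph *ᵥ u = 0 - (z - β • u) := by
      rw [hPhu, Matrix.mulVec_sub, hSu, hSz]
    have hGu : Ph *ᵥ u - S *ᵥ Ph *ᵥ u = lam • u := by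
      rw [hSPhu, hPhu]
      have h10 : lam = 1 - β := by rw [hβ]; ring
      rw [h10, sub_smul, one_smul]
      abel
    have hx0 : Ph *ᵥ u ≠ 0 := by
      intro h
      rw [h, Matrix.mulVec_zero, zero_sub, neg_zero] at hGu
      exact hu0 ((smul_eq_zero.mp hGu.symm).resolve_left hlam0)
    exact ⟨Ph *ᵥ u, hx0, by rw [wJ, hGu, Matrix.mulVec_smul]⟩

lemma zero_eig {m mc : Type*} [Fintype m] [DecidableEq m] [Fintype mc] [DecidableEq mc]
    (Ph K : Matrix m m ℂ) (D : Matrix m mc ℂ) (A : Matrix mc m ℂ)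
    (B Bi : Matrix mc mc ℂ) (hBiB : Bi * B = 1) (hB : B = A * K * D) (v : mc → ℂ) :
    (Ph * (1 - D * Bi * (A * K))).mulVec (D *ᵥ v) = 0 := by
  have wBiB : ∀ w : mc → ℂ, Bi *ᵥ B *ᵥ w = w := fun w => by
    rw [Matrix.mulVec_mulVec, hBiB, Matrix.one_mulVec]
  have wB : ∀ w : mc → ℂ, B *ᵥ w = A *ᵥ K *ᵥ D *ᵥ w := fun w => by
    rw [hB]
    simp only [← Matrix.mulVec_mulVec]
  have wSD : ∀ w : mc → ℂ, (D * Bi * (A * K)) *ᵥ D *ᵥ w = D *ᵥ w := fun w => by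
    simp only [← Matrix.mulVec_mulVec]
    rw [← wB, wBiB]
  rw [← Matrix.mulVec_mulVec, Matrix.sub_mulVec, Matrix.one_mulVec, wSD, sub_self,
    Matrix.mulVec_zero]

end Key

section MapHelpers
variable {p q r : Type*} [Fintype q]

lemma map_mulC (M : Matrix p q ℝ) (N : Matrix q r ℝ) :
    (M * N).map Complex.ofReal = M.map Complex.ofReal * N.map Complex.ofReal := by
  ext i j
  simp only [Matrix.map_apply, Matrix.mul_apply]
  push_cast
  rfl

lemma map_oneC {p : Type*} [Fintype p] [DecidableEq p] :
    (1 : Matrix p p ℝ).map Complex.ofReal = 1 := by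
  ext i j
  by_cases h : i = j <;> simp [Matrix.map_apply, Matrix.one_apply, h]

lemma map_subC (M N : Matrix p r ℝ) :
    (M - N).map Complex.ofReal = M.map Complex.ofReal - N.map Complex.ofReal := by
  ext i j
  simp [Matrix.map_apply]

lemma map_addC (M N : Matrix p r ℝ) :
    (M + N).map Complex.ofReal = M.map Complex.ofReal + N.map Complex.ofReal := by
  ext i j
  simp [Matrix.map_apply]

end MapHelpers


/-- exact spectrum formula:
`σ(J(μ)) = (1 - 1/(σ((I-Π)(I-P̂)⁻¹(I-Π)) \ {0})) ∪ {0}`. -/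
theorem stmt17 {N n : ℕ} (P : Matrix (Fin N) (Fin N) ℝ)
    (μ : Fin N → ℝ) (hP : ColStoch P) (hirr : Irred P) (hirr2 : Irred (Pᵀ * P))
    (hμpos : ∀ i, 0 < μ i) (hμsum : ∑ i, μ i = 1) (hinv : P.mulVec μ = μ)
    (f : Fin N → Fin n) (hf : Function.Surjective f)
    (hn : 1 < n) (hcoarse : ∃ a b : Fin N, a ≠ b ∧ f a = f b) :
    specC (Jop P f μ μ) =
      ((fun α : ℂ => 1 - α⁻¹) ''
        (specC ((1 - PiProj f μ) * (1 - hatP P μ)⁻¹ * (1 - PiProj f μ)) \ {0})) ∪ {0} :=  by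
  classical
  obtain ⟨a0, b0, hab, hfab⟩ := hcoarse
  haveI hNne : Nonempty (Fin N) := ⟨a0⟩
  haveI hnne : Nonempty (Fin n) := ⟨⟨0, by omega⟩⟩
  set A := Agg f with hA
  set Dm := Disagg f μ with hDmdef
  set K : Matrix (Fin N) (Fin N) ℝ := 1 - P + vecMulVec μ 1 with hKdef
  set Br : Matrix (Fin n) (Fin n) ℝ := A * K * Dm with hBrdef
  set C : Matrix (Fin n) (Fin n) ℝ := A * P * Dm with hCdef
  set μc : Fin n → ℝ := A.mulVec μ with hμcdef
  have hK1 : K = 1 - hatP P μ := by rw [hKdef]; unfold hatP; abel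
  -- coarse facts
  have hCcs : ColStoch C := coarse_colstoch P f μ hP hf hμpos
  have hCirr : Irred C := coarse_irred P f μ hP hirr hf hμpos
  have hCfix : C.mulVec μc = μc := coarse_fix P f μ hf hμpos hinv
  have hμcpos : ∀ i, 0 < μc i := aggMu_pos f μ hf hμpos
  have hμcsum : ∑ i, μc i = 1 := aggMu_sum f μ hμsum
  have hBrC : Br = 1 - C + vecMulVec μc 1 := by
    rw [hBrdef, hKdef, hCdef, hμcdef,
      Matrix.mul_add, Matrix.mul_sub, Matrix.mul_one, Matrix.add_mul, Matrix.sub_mul,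
      agg_disagg f μ hf hμpos, agg_vmv_disagg f μ hf hμpos]
  -- complex determinants
  have hdetKc : (K.map Complex.ofReal).det ≠ 0 := by
    intro h
    obtain ⟨v, hv, hveq⟩ := (Matrix.exists_mulVec_eq_zero_iff).mpr h
    refine hv (ker_triv P hP hirr μ hμpos hμsum hinv v ?_)
    rw [← hKdef]
    exact hveq
  have hdetBc : (Br.map Complex.ofReal).det ≠ 0 := by
    intro h
    obtain ⟨v, hv, hveq⟩ := (Matrix.exists_mulVec_eq_zero_iff).mpr h
    refine hv (ker_triv C hCcs hCirr μc hμcpos hμcsum hCfix v ?_)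
    rw [← hBrC]
    exact hveq
  -- real invertibility
  have hdetKr : K.det ≠ 0 := by
    intro h
    apply hdetKc
    have hmd : (K.map Complex.ofReal).det = Complex.ofReal K.det :=
      (RingHom.map_det Complex.ofRealHom K).symm
    rw [hmd, h, Complex.ofReal_zero]
  have hdetBr : Br.det ≠ 0 := by
    intro h
    apply hdetBc
    have hmd : (Br.map Complex.ofReal).det = Complex.ofReal Br.det :=
      (RingHom.map_det Complex.ofRealHom Br).symm
    rw [hmd, h, Complex.ofReal_zero]
  have hKK : K * K⁻¹ = 1 := Matrix.mul_nonsing_inv _ (isUnit_iff_ne_zero.mpr hdetKr)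
  have hKiKr : K⁻¹ * K = 1 := Matrix.nonsing_inv_mul _ (isUnit_iff_ne_zero.mpr hdetKr)
  have hBB : Br * Br⁻¹ = 1 := Matrix.mul_nonsing_inv _ (isUnit_iff_ne_zero.mpr hdetBr)
  have hBiBr : Br⁻¹ * Br = 1 := Matrix.nonsing_inv_mul _ (isUnit_iff_ne_zero.mpr hdetBr)
  -- complex matrices
  set Ac := A.map Complex.ofReal with hAc
  set Dc := Dm.map Complex.ofReal with hDc
  set Kc := K.map Complex.ofReal with hKc
  set Kic := (K⁻¹).map Complex.ofReal with hKic
  set Bc := Br.map Complex.ofReal with hBc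
  set Bic := (Br⁻¹).map Complex.ofReal with hBic
  set Phc := (hatP P μ).map Complex.ofReal with hPhc
  have hADc : Ac * Dc = 1 := by
    rw [hAc, hDc, ← map_mulC, agg_disagg f μ hf hμpos, map_oneC]
  have hKc1 : Kc = 1 - Phc := by
    rw [hKc, hK1, map_subC, map_oneC, hPhc]
  have hKKic : Kc * Kic = 1 := by rw [hKc, hKic, ← map_mulC, hKK, map_oneC]
  have hKicK : Kic * Kc = 1 := by rw [hKc, hKic, ← map_mulC, hKiKr, map_oneC]
  have hBBic : Bc * Bic = 1 := by rw [hBc, hBic, ← map_mulC, hBB, map_oneC]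
  have hBicB : Bic * Bc = 1 := by rw [hBc, hBic, ← map_mulC, hBiBr, map_oneC]
  have hBceq : Bc = Ac * Kc * Dc := by
    rw [hBc, hBrdef, map_mulC, map_mulC, hAc, hKc, hDc]
  -- map of J
  have hJr : Jop P f μ μ = hatP P μ * (1 - Dm * Br⁻¹ * (A * K)) := rfl
  have hJmap : (Jop P f μ μ).map Complex.ofReal = Phc * (1 - Dc * Bic * (Ac * Kc)) := by
    rw [hJr, map_mulC, map_subC, map_oneC, map_mulC, map_mulC, map_mulC,
      hPhc, hDc, hBic, hAc, hKc]
  -- map of Q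
  have hQr : (1 - PiProj f μ) * (1 - hatP P μ)⁻¹ * (1 - PiProj f μ)
      = (1 - Dm * A) * K⁻¹ * (1 - Dm * A) := by
    rw [← hK1]
    rfl
  have hQmap : ((1 - PiProj f μ) * (1 - hatP P μ)⁻¹ * (1 - PiProj f μ)).map Complex.ofReal
      = (1 - Dc * Ac) * Kic * (1 - Dc * Ac) := by
    rw [hQr, map_mulC, map_mulC, map_subC, map_oneC, map_mulC, hDc, hAc, hKic]
  -- spectra membership
  have hspec : ∀ (M : Matrix (Fin N) (Fin N) ℝ) (l : ℂ), l ∈ specC M ↔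
      ∃ x, x ≠ 0 ∧ (M.map Complex.ofReal).mulVec x = l • x := fun M l =>
    mem_spec_iff (M.map Complex.ofReal) l
  ext lam
  simp only [Set.mem_union, Set.mem_image, Set.mem_diff, Set.mem_singleton_iff]
  by_cases hlam0 : lam = 0
  · subst hlam0
    refine iff_of_true ?_ (Or.inr rfl)
    rw [hspec, hJmap]
    set v : Fin N → ℂ := Dc *ᵥ (fun _ => (1:ℂ)) with hv
    refine ⟨v, ?_, by rw [hv, zero_smul]; exact zero_eig Phc Kc Dc Ac Bc Bic hBicB hBceq _⟩
    intro h
    have h1 : v a0 = ((μ a0 / μc (f a0) : ℝ) : ℂ) := by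
      rw [hv]
      show ∑ i, Dc a0 i * 1 = _
      simp only [hDc, Matrix.map_apply, mul_one]
      rw [← Complex.ofReal_sum]
      congr 1
      simp only [hDmdef, disagg_apply, hμcdef]
      rw [Finset.sum_ite_eq Finset.univ (f a0) (fun i => μ a0 / (Agg f *ᵥ μ) i)]
      simp
      rfl
    have h2 : (0:ℝ) < μ a0 / μc (f a0) := div_pos (hμpos a0) (hμcpos (f a0))
    rw [h, Pi.zero_apply] at h1
    exact absurd (Complex.ofReal_eq_zero.mp h1.symm) h2.ne'
  · have hkey := key_equiv Phc Kc Kic Dc Ac Bc Bic hKc1 hKKic hKicK hBBic hBicB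
      hADc hBceq lam hlam0
    constructor
    · intro hmem
      rw [hspec, hJmap] at hmem
      obtain ⟨hlam1, z, hz0, hz⟩ := hkey.mp hmem
      refine Or.inl ⟨(1 - lam)⁻¹, ⟨?_, inv_ne_zero (sub_ne_zero.mpr (Ne.symm hlam1))⟩, ?_⟩
      · rw [hspec, hQmap]
        exact ⟨z, hz0, hz⟩
      · rw [inv_inv]
        ring
    · rintro (⟨α, ⟨hαQ, hα0⟩, hαlam⟩ | h)
      · have hlam1 : lam ≠ 1 := by
          intro h1
          rw [h1, sub_eq_self] at hαlam
          exact hα0 (inv_eq_zero.mp hαlam)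
        have hαval : (1 - lam)⁻¹ = α := by
          rw [← hαlam, sub_sub_cancel, inv_inv]
        rw [hspec, hQmap] at hαQ
        obtain ⟨z, hz0, hz⟩ := hαQ
        rw [hspec, hJmap]
        exact hkey.mpr ⟨hlam1, z, hz0, by rw [hαval]; exact hz⟩
      · exact absurd h hlam0
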